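/- Let a, b > 0, p > 1, A > 0 and let h : (0,∞) → ℝ be differentiable with s·h'(s) > (p²−1)·h(s) for all s > 0 and h(s) > 0 for all s > 0. Define g'(s) = A·(a + b·A·s^p)^{p−1}·s^{p−1} − h(s). If g'(s₀) = 0 for some s₀ > 0, then g''(s₀) < 0, where g''(s) = bp(p−1)A²(a+bAs^p)^{p−2}s^{2p−2} + (p−1)A(a+bAs^p)^{p−1}s^{p−2} − h'(s). -/
import Mathlib


/-- every critical point of the fiber map is a strict local maximum
(computation (3.6)). -/
theorem stmt_14 (a b p A : ℝ) (ha : 0 < a) (hb : 0 < b) (hp : 1 < p) (hA : 0 < A)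
    (h h' : ℝ → ℝ)
    (hderiv : ∀ s > (0:ℝ), HasDerivAt h (h' s) s)
    (hineq : ∀ s > (0:ℝ), s * h' s > (p ^ 2 - 1) * h s)
    (hpos : ∀ s > (0:ℝ), 0 < h s) :
    ∀ s₀ > (0:ℝ),
      A * (a + b * A * s₀ ^ p) ^ (p - 1) * s₀ ^ (p - 1) - h s₀ = 0 →
      b * p * (p - 1) * A ^ 2 * (a + b * A * s₀ ^ p) ^ (p - 2) * s₀ ^ (2 * p - 2)
        + (p - 1) * A * (a + b * A * s₀ ^ p) ^ (p - 1) * s₀ ^ (p - 2)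
        - h' s₀ < 0 := by
  intro s₀ hs₀ hcrit
  have hsp : 0 < s₀ ^ p := Real.rpow_pos_of_pos hs₀ p
  have hK : 0 < a + b * A * s₀ ^ p := by positivity
  have hE : 0 < (a + b * A * s₀ ^ p) ^ (p - 2) := Real.rpow_pos_of_pos hK _
  have hF : 0 < s₀ ^ (p - 2) := Real.rpow_pos_of_pos hs₀ _
  have e1 : (a + b * A * s₀ ^ p) ^ (p - 1)
      = (a + b * A * s₀ ^ p) ^ (p - 2) * (a + b * A * s₀ ^ p) := by
    rw [show p - 1 = (p - 2) + 1 by ring, Real.rpow_add hK, Real.rpow_one]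
  have e2 : s₀ ^ (2 * p - 2) = s₀ ^ p * s₀ ^ (p - 2) := by
    rw [show 2 * p - 2 = p + (p - 2) by ring, Real.rpow_add hs₀]
  have e3 : s₀ ^ (p - 1) = s₀ * s₀ ^ (p - 2) := by
    rw [show p - 1 = 1 + (p - 2) by ring, Real.rpow_add hs₀, Real.rpow_one]
  rw [e1, e3] at hcrit
  rw [e1, e2]
  have hineq' := hineq s₀ hs₀
  have hh : h s₀ = A * ((a + b * A * s₀ ^ p) ^ (p - 2) * (a + b * A * s₀ ^ p))
      * (s₀ * s₀ ^ (p - 2)) := by linarith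
  rw [hh] at hineq'
  have hp1 : 0 < p - 1 := by linarith
  nlinarith [mul_pos hE hF, mul_pos (mul_pos hE hF) hsp, mul_pos hs₀ hF,
    mul_pos (mul_pos hA (mul_pos hE hF)) hs₀,
    mul_pos (mul_pos (mul_pos hA hE) hF) (mul_pos hp1 (mul_pos hs₀ ha))]
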